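/- MEHC upper-bounds the span of optimal values of the extended MDP: Let M = (S, A, p, r) be a bounded MDP with rewards in [0, r_max]. For each (s,a) let B(s,a) ⊆ [0, r_max] be a nonempty compact set of plausible mean rewards and C(s,a) a nonempty compact set of plausible transition distributions on S, and suppose r̄(s,a) ∈ B(s,a) and p(·|s,a) ∈ C(s,a) for all s ∈ S, a ∈ A. Define the i-step optimal values of the extended MDP by u_0(s) := 0 and u_{i+1}(s) := max_{a∈A} [ max_{r'∈B(s,a)} r' + max_{p'∈C(s,a)} Σ_{s'} p'(s')·u_i(s') ]. Then for every i ≥ 0, max_s u_i(s) − min_{s'} u_i(s') ≤ κ(M). -/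

import Mathlib

open scoped ENNReal

noncomputable section

/-- The probability that a Markov chain with transition kernel `Q` started at `s`
traverses exactly the initial path segment `path`. -/
def pathProb {S : Type*} [DecidableEq S] (Q : S → S → ℝ≥0∞) (s : S) {t : ℕ}
    (path : Fin (t + 1) → S) : ℝ≥0∞ :=
  (if path 0 = s then 1 else 0) * ∏ i : Fin t, Q (path i.castSucc) (path i.succ)

/-- The expected hitting time `E[h_{s→s'}]` of `s'` from `s` for the kernel `Q`,
via `E[h] = ∑_t P[h > t]`, where `h > t` iff the path avoids `s'` up to time `t`. -/
def hitTimeE {S : Type*} [Fintype S] [DecidableEq S] (Q : S → S → ℝ≥0∞) (s s' : S) :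
    ℝ≥0∞ :=
  ∑' t : ℕ, ∑ path : Fin (t + 1) → S,
    if ∀ i, path i ≠ s' then pathProb Q s path else 0

/-- The expected hitting cost `E[∑_{t=0}^{h_{s→s'}-1} c(s_t)]` of `s'` from `s`
for the kernel `Q` and per-state cost `c`. -/
def hitCostE {S : Type*} [Fintype S] [DecidableEq S] (Q : S → S → ℝ≥0∞) (c : S → ℝ≥0∞)
    (s s' : S) : ℝ≥0∞ :=
  ∑' t : ℕ, ∑ path : Fin (t + 1) → S,
    if ∀ i, path i ≠ s' then pathProb Q s path * c (path (Fin.last t)) else 0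

/-- The state-transition kernel induced by following policy `π` in an MDP with
transition function `p`. -/
def polKernel {S A : Type*} (p : S → A → S → ℝ≥0∞) (π : S → A) : S → S → ℝ≥0∞ :=
  fun s s' => p s (π s) s'

/-- The diameter `D(M) = max_{s,s'} min_π E[h_{s→s'}(M,π)]` of an MDP. -/
def diam {S A : Type*} [Fintype S] [DecidableEq S] (p : S → A → S → ℝ≥0∞) : ℝ≥0∞ :=
  ⨆ s, ⨆ s', ⨅ π : S → A, hitTimeE (polKernel p π) s s'

/-- The maximum expected hitting cost
`κ(M) = max_{s,s'} min_π E[∑_{t=0}^{h_{s→s'}(M,π)-1} (r_max - r_t)]` of an MDP with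
mean rewards `rbar`. -/
def mehc {S A : Type*} [Fintype S] [DecidableEq S] (p : S → A → S → ℝ≥0∞) (rmax : ℝ)
    (rbar : S → A → ℝ) : ℝ≥0∞ :=
  ⨆ s, ⨆ s', ⨅ π : S → A,
    hitCostE (polKernel p π) (fun x => ENNReal.ofReal (rmax - rbar x (π x))) s s'

/-- The `i`-step optimal values of the extended MDP determined by the plausible mean
rewards `B s a ⊆ ℝ` and plausible transition vectors `C s a ⊆ (S → ℝ)`:
`u 0 = 0`, `u (i+1) s = max_a (sup B(s,a) + sup_{p' ∈ C(s,a)} ∑_{s'} p'(s') · u i s')`. -/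
def uIter {S A : Type*} [Fintype S] (B : S → A → Set ℝ) (C : S → A → Set (S → ℝ)) :
    ℕ → S → ℝ
  | 0, _ => 0
  | i + 1, s =>
      ⨆ a : A, (sSup (B s a)
        + sSup ((fun q : S → ℝ => ∑ s', q s' * uIter B C i s') '' C s a))

section Bellman

variable {S : Type*} [Fintype S] [DecidableEq S]

def Fcost (Q : S → S → ℝ≥0∞) (c : S → ℝ≥0∞) (s' : S) (t : ℕ) (s : S) : ℝ≥0∞ :=
  ∑ path : Fin (t + 1) → S,
    if ∀ i, path i ≠ s' then pathProb Q s path * c (path (Fin.last t)) else 0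

def innerF (Q : S → S → ℝ≥0∞) (c : S → ℝ≥0∞) (s s' : S) (t : ℕ)
    (q : Fin (t + 1) → S) : ℝ≥0∞ :=
  if ∀ i, q i ≠ s' then
    Q s (q 0) * ((∏ i : Fin t, Q (q i.castSucc) (q i.succ)) * c (q (Fin.last t)))
  else 0

lemma hitCostE_eq (Q : S → S → ℝ≥0∞) (c : S → ℝ≥0∞) (s s' : S) :
    hitCostE Q c s s' = ∑' t, Fcost Q c s' t s := rfl

lemma hitCostE_self (Q : S → S → ℝ≥0∞) (c : S → ℝ≥0∞) (s' : S) :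
    hitCostE Q c s' s' = 0 := by
  rw [hitCostE]
  convert tsum_zero with t
  apply Finset.sum_eq_zero
  intro path _
  split
  · rename_i h
    have h0 : path 0 ≠ s' := h 0
    simp [pathProb, h0]
  · rfl

lemma Fcost_zero (Q : S → S → ℝ≥0∞) (c : S → ℝ≥0∞) {s s' : S} (h : s ≠ s') :
    Fcost Q c s' 0 s = c s := by
  rw [Fcost]
  rw [Finset.sum_eq_single (fun _ : Fin 1 => s)]
  · have : ∀ i : Fin 1, (fun _ : Fin 1 => s) i ≠ s' := fun _ => h
    simp [this, pathProb, h]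
  · intro b _ hb
    have hb0 : b 0 ≠ s := by
      intro hc
      apply hb
      funext i
      have : i = 0 := Subsingleton.elim _ _
      rw [this, hc]
    split
    · simp [pathProb, hb0]
    · rfl
  · intro hmem
    exact absurd (Finset.mem_univ _) hmem

lemma Fcost_succ (Q : S → S → ℝ≥0∞) (c : S → ℝ≥0∞) {s s' : S} (h : s ≠ s') (t : ℕ) :
    Fcost Q c s' (t + 1) s = ∑ x, Q s x * Fcost Q c s' t x := by
  classical
  have hL : Fcost Q c s' (t + 1) s = ∑ q : Fin (t + 1) → S, innerF Q c s s' t q := by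
    rw [Fcost, ← Equiv.sum_comp (Fin.consEquiv (fun _ : Fin (t + 2) => S))]
    rw [Fintype.sum_prod_type]
    have hterm : ∀ (x : S) (q : Fin (t + 1) → S),
        (if ∀ i, (Fin.cons x q : Fin (t+2) → S) i ≠ s' then
          pathProb Q s (Fin.cons x q) * c ((Fin.cons x q : Fin (t+2) → S) (Fin.last (t+1)))
        else 0) = if x = s then innerF Q c s s' t q else 0 := by
      intro x q
      have hcond : (∀ i : Fin (t + 2), (Fin.cons x q : Fin (t+2) → S) i ≠ s') ↔
          (x ≠ s' ∧ ∀ i : Fin (t + 1), q i ≠ s') := by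
        rw [Fin.forall_fin_succ]
        simp [Fin.cons_succ]
      have hlast : (Fin.cons x q : Fin (t+2) → S) (Fin.last (t + 1)) = q (Fin.last t) := by
        rw [← Fin.succ_last, Fin.cons_succ]
      have hprob : pathProb Q s (Fin.cons x q) =
          (if x = s then 1 else 0) *
            (Q x (q 0) * ∏ i : Fin t, Q (q i.castSucc) (q i.succ)) := by
        have hp1 : ∏ i : Fin (t + 1), Q ((Fin.cons x q : Fin (t+2) → S) i.castSucc)
              ((Fin.cons x q : Fin (t+2) → S) i.succ)
            = Q x (q 0) * ∏ i : Fin t, Q (q i.castSucc) (q i.succ) := by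
          rw [Fin.prod_univ_succ]
          have h0 : Q ((Fin.cons x q : Fin (t+2) → S) (0 : Fin (t+1)).castSucc)
              ((Fin.cons x q : Fin (t+2) → S) (0 : Fin (t+1)).succ) = Q x (q 0) := by
            simp [Fin.castSucc_zero, Fin.cons_succ, Fin.cons_zero]
          rw [h0]
          have h2 : ∏ i : Fin t, Q ((Fin.cons x q : Fin (t+2) → S) i.succ.castSucc)
                ((Fin.cons x q : Fin (t+2) → S) i.succ.succ)
              = ∏ i : Fin t, Q (q i.castSucc) (q i.succ) := by
            apply Finset.prod_congr rfl
            intro i _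
            rw [← Fin.succ_castSucc]
            simp [Fin.cons_succ]
          rw [h2]
        rw [pathProb, hp1]
        simp only [Fin.cons_zero]
      by_cases hx : x = s
      · subst hx
        rw [innerF, hprob, hlast, if_pos rfl, one_mul, if_pos rfl]
        by_cases hq : ∀ i : Fin (t + 1), q i ≠ s'
        · rw [if_pos (hcond.mpr ⟨h, hq⟩), if_pos hq]
          ring
        · rw [if_neg, if_neg hq]
          intro hc
          exact hq (hcond.mp hc).2
      · rw [if_neg hx, hprob, if_neg hx]
        simp
    calc ∑ x : S, ∑ q : Fin (t + 1) → S,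
          (if ∀ i, ((Fin.consEquiv (fun _ : Fin (t+2) => S)) (x, q) : Fin (t+2) → S) i ≠ s' then
            pathProb Q s ((Fin.consEquiv (fun _ : Fin (t+2) => S)) (x, q)) *
              c (((Fin.consEquiv (fun _ : Fin (t+2) => S)) (x, q) : Fin (t+2) → S) (Fin.last (t+1)))
          else 0)
        = ∑ x : S, ∑ q : Fin (t + 1) → S, (if x = s then innerF Q c s s' t q else 0) := by
          apply Finset.sum_congr rfl; intro x _
          apply Finset.sum_congr rfl; intro q _
          exact hterm x q
      _ = ∑ x : S, (if x = s then ∑ q : Fin (t + 1) → S, innerF Q c s s' t q else 0) := by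
          apply Finset.sum_congr rfl; intro x _
          split <;> simp
      _ = ∑ q : Fin (t + 1) → S, innerF Q c s s' t q := by
          rw [Finset.sum_ite_eq' Finset.univ s]; simp
  have hR : ∑ x, Q s x * Fcost Q c s' t x = ∑ q : Fin (t + 1) → S, innerF Q c s s' t q := by
    have hterm : ∀ (x : S) (q : Fin (t + 1) → S),
        Q s x * (if ∀ i, q i ≠ s' then pathProb Q x q * c (q (Fin.last t)) else 0)
          = if q 0 = x then innerF Q c s s' t q else 0 := by
      intro x q
      rw [innerF, pathProb]
      by_cases hqx : q 0 = x
      · rw [if_pos hqx]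
        by_cases hq : ∀ i : Fin (t + 1), q i ≠ s'
        · rw [if_pos hq, if_pos hq, if_pos hqx, ← hqx]
          ring
        · rw [if_neg hq, if_neg hq, mul_zero]
          simp
      · simp [hqx]
    calc ∑ x, Q s x * Fcost Q c s' t x
        = ∑ x : S, ∑ q : Fin (t + 1) → S, (if q 0 = x then innerF Q c s s' t q else 0) := by
          apply Finset.sum_congr rfl; intro x _
          rw [Fcost, Finset.mul_sum]
          apply Finset.sum_congr rfl; intro q _
          exact hterm x q
      _ = ∑ q : Fin (t + 1) → S, ∑ x : S, (if q 0 = x then innerF Q c s s' t q else 0) :=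
          Finset.sum_comm
      _ = ∑ q : Fin (t + 1) → S, innerF Q c s s' t q := by
          apply Finset.sum_congr rfl; intro q _
          rw [Finset.sum_ite_eq Finset.univ (q 0)]; simp
  rw [hL, hR]

lemma hitCostE_ne (Q : S → S → ℝ≥0∞) (c : S → ℝ≥0∞) {s s' : S} (h : s ≠ s') :
    hitCostE Q c s s' = c s + ∑ x, Q s x * hitCostE Q c x s' := by
  rw [hitCostE_eq, tsum_eq_zero_add' ENNReal.summable, Fcost_zero Q c h]
  congr 1
  calc ∑' t, Fcost Q c s' (t + 1) s = ∑' t, ∑ x, Q s x * Fcost Q c s' t x :=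
        tsum_congr fun t => Fcost_succ Q c h t
    _ = ∑ x, ∑' t, Q s x * Fcost Q c s' t x :=
        Summable.tsum_finsetSum fun _ _ => ENNReal.summable
    _ = ∑ x, Q s x * hitCostE Q c x s' := by
        apply Finset.sum_congr rfl; intro x _
        rw [ENNReal.tsum_mul_left, hitCostE_eq]

end Bellman

section UAux

variable {S A : Type*} [Fintype S] [DecidableEq S] [Fintype A] [Nonempty A]

lemma contSum (v : S → ℝ) : Continuous fun q : S → ℝ => ∑ x, q x * v x :=
  continuous_finset_sum _ fun x _ => (continuous_apply x).mul continuous_const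

lemma uIter_le (rmax : ℝ) (B : S → A → Set ℝ) (C : S → A → Set (S → ℝ))
    (hBne : ∀ s a, (B s a).Nonempty)
    (hBsub : ∀ s a, B s a ⊆ Set.Icc 0 rmax)
    (hCne : ∀ s a, (C s a).Nonempty)
    (hCdist : ∀ s a, ∀ q ∈ C s a, (∀ s', 0 ≤ q s') ∧ ∑ s', q s' = 1) :
    ∀ i (s : S), uIter B C i s ≤ i * rmax := by
  intro i
  induction i with
  | zero => intro s; simp [uIter]
  | succ i ih =>
    intro s
    rw [show uIter B C (i + 1) s = ⨆ a : A, (sSup (B s a)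
        + sSup ((fun q : S → ℝ => ∑ s', q s' * uIter B C i s') '' C s a)) from rfl]
    apply ciSup_le
    intro a
    have h1 : sSup (B s a) ≤ rmax := csSup_le (hBne s a) fun b hb => (hBsub s a hb).2
    have h2 : sSup ((fun q : S → ℝ => ∑ s', q s' * uIter B C i s') '' C s a)
        ≤ i * rmax := by
      apply csSup_le ((hCne s a).image _)
      rintro y ⟨q, hq, rfl⟩
      obtain ⟨hq0, hq1⟩ := hCdist s a q hq
      calc ∑ s', q s' * uIter B C i s' ≤ ∑ s', q s' * (i * rmax) :=
            Finset.sum_le_sum fun x _ => mul_le_mul_of_nonneg_left (ih x) (hq0 x)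
        _ = i * rmax := by rw [← Finset.sum_mul, hq1, one_mul]
    push_cast
    linarith

lemma uIter_step (rmax : ℝ) (B : S → A → Set ℝ) (C : S → A → Set (S → ℝ))
    (hBne : ∀ s a, (B s a).Nonempty)
    (hBsub : ∀ s a, B s a ⊆ Set.Icc 0 rmax)
    (hCne : ∀ s a, (C s a).Nonempty) (hCcp : ∀ s a, IsCompact (C s a))
    (hCdist : ∀ s a, ∀ q ∈ C s a, (∀ s', 0 ≤ q s') ∧ ∑ s', q s' = 1) :
    ∀ i (s : S), uIter B C (i + 1) s ≤ uIter B C i s + rmax := by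
  intro i
  induction i with
  | zero =>
    intro s
    rw [show uIter B C 1 s = ⨆ a : A, (sSup (B s a)
        + sSup ((fun q : S → ℝ => ∑ s', q s' * uIter B C 0 s') '' C s a)) from rfl]
    apply ciSup_le
    intro a
    have h1 : sSup (B s a) ≤ rmax := csSup_le (hBne s a) fun b hb => (hBsub s a hb).2
    have h2 : sSup ((fun q : S → ℝ => ∑ s', q s' * uIter B C 0 s') '' C s a) ≤ 0 := by
      apply csSup_le ((hCne s a).image _)
      rintro y ⟨q, hq, rfl⟩
      simp [uIter]
    have : uIter B C 0 s = 0 := rfl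
    linarith
  | succ i ih =>
    intro s
    rw [show uIter B C (i + 2) s = ⨆ a : A, (sSup (B s a)
        + sSup ((fun q : S → ℝ => ∑ s', q s' * uIter B C (i + 1) s') '' C s a)) from rfl]
    apply ciSup_le
    intro a
    have key : sSup ((fun q : S → ℝ => ∑ s', q s' * uIter B C (i + 1) s') '' C s a)
        ≤ sSup ((fun q : S → ℝ => ∑ s', q s' * uIter B C i s') '' C s a) + rmax := by
      apply csSup_le ((hCne s a).image _)
      rintro y ⟨q, hq, rfl⟩
      obtain ⟨hq0, hq1⟩ := hCdist s a q hq
      have h3 : ∑ s', q s' * uIter B C (i + 1) s'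
          ≤ ∑ s', q s' * (uIter B C i s' + rmax) :=
        Finset.sum_le_sum fun x _ => mul_le_mul_of_nonneg_left (ih x) (hq0 x)
      have h4 : ∑ s', q s' * (uIter B C i s' + rmax)
          = (∑ s', q s' * uIter B C i s') + rmax := by
        simp only [mul_add]
        rw [Finset.sum_add_distrib, ← Finset.sum_mul, hq1, one_mul]
      have h5 : ∑ s', q s' * uIter B C i s'
          ≤ sSup ((fun q : S → ℝ => ∑ s', q s' * uIter B C i s') '' C s a) :=
        le_csSup ((hCcp s a).image (contSum _)).bddAbove ⟨q, hq, rfl⟩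
      linarith
    have h6 : sSup (B s a)
        + sSup ((fun q : S → ℝ => ∑ s', q s' * uIter B C i s') '' C s a)
        ≤ uIter B C (i + 1) s := by
      rw [show uIter B C (i + 1) s = ⨆ a : A, (sSup (B s a)
          + sSup ((fun q : S → ℝ => ∑ s', q s' * uIter B C i s') '' C s a)) from rfl]
      exact le_ciSup (f := fun a : A => sSup (B s a)
        + sSup ((fun q : S → ℝ => ∑ s', q s' * uIter B C i s') '' C s a))
        ((Set.finite_range _).bddAbove) a
    linarith

lemma uIter_steps (rmax : ℝ) (B : S → A → Set ℝ) (C : S → A → Set (S → ℝ))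
    (hBne : ∀ s a, (B s a).Nonempty)
    (hBsub : ∀ s a, B s a ⊆ Set.Icc 0 rmax)
    (hCne : ∀ s a, (C s a).Nonempty) (hCcp : ∀ s a, IsCompact (C s a))
    (hCdist : ∀ s a, ∀ q ∈ C s a, (∀ s', 0 ≤ q s') ∧ ∑ s', q s' = 1) :
    ∀ d i (s : S), uIter B C (i + d) s ≤ uIter B C i s + d * rmax := by
  intro d
  induction d with
  | zero => intro i s; simp
  | succ d ih =>
    intro i s
    have h1 : uIter B C (i + d + 1) s ≤ uIter B C (i + d) s + rmax :=
      uIter_step rmax B C hBne hBsub hCne hCcp hCdist (i + d) s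
    have h2 := ih i s
    have h3 : i + (d + 1) = (i + d) + 1 := rfl
    rw [h3]
    push_cast
    linarith

lemma uIter_bellman (p : S → A → S → ℝ≥0∞) (rbar : S → A → ℝ)
    (B : S → A → Set ℝ) (C : S → A → Set (S → ℝ))
    (hBcp : ∀ s a, IsCompact (B s a)) (hCcp : ∀ s a, IsCompact (C s a))
    (hrB : ∀ s a, rbar s a ∈ B s a)
    (hpC : ∀ s a, (fun s' => (p s a s').toReal) ∈ C s a) :
    ∀ i (s : S) (a : A),
      rbar s a + ∑ x, (p s a x).toReal * uIter B C i x ≤ uIter B C (i + 1) s := by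
  intro i s a
  have h1 : rbar s a ≤ sSup (B s a) := le_csSup (hBcp s a).bddAbove (hrB s a)
  have h2 : (∑ x, (p s a x).toReal * uIter B C i x)
      ≤ sSup ((fun q : S → ℝ => ∑ s', q s' * uIter B C i s') '' C s a) :=
    le_csSup ((hCcp s a).image (contSum _)).bddAbove ⟨_, hpC s a, rfl⟩
  have h3 : sSup (B s a)
      + sSup ((fun q : S → ℝ => ∑ s', q s' * uIter B C i s') '' C s a)
      ≤ uIter B C (i + 1) s := by
    rw [show uIter B C (i + 1) s = ⨆ a : A, (sSup (B s a)
        + sSup ((fun q : S → ℝ => ∑ s', q s' * uIter B C i s') '' C s a)) from rfl]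
    exact le_ciSup (f := fun a : A => sSup (B s a)
      + sSup ((fun q : S → ℝ => ∑ s', q s' * uIter B C i s') '' C s a))
      ((Set.finite_range _).bddAbove) a
  linarith

end UAux

/-- if the actual MDP is contained in the extended MDP, then the span of
the `i`-step optimal values of the extended MDP is bounded by `κ(M)`. -/
theorem stmt10 {S A : Type*} [Fintype S] [DecidableEq S] [Nonempty S] [Fintype A]
    [Nonempty A]
    (p : S → A → S → ℝ≥0∞) (hp : ∀ s a, ∑ s', p s a s' = 1)
    (rmax : ℝ) (hrmax : 0 ≤ rmax)
    (rbar : S → A → ℝ) (hr : ∀ s a, rbar s a ∈ Set.Icc 0 rmax)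
    (B : S → A → Set ℝ)
    (hBne : ∀ s a, (B s a).Nonempty) (hBcp : ∀ s a, IsCompact (B s a))
    (hBsub : ∀ s a, B s a ⊆ Set.Icc 0 rmax)
    (C : S → A → Set (S → ℝ))
    (hCne : ∀ s a, (C s a).Nonempty) (hCcp : ∀ s a, IsCompact (C s a))
    (hCdist : ∀ s a, ∀ q ∈ C s a, (∀ s', 0 ≤ q s') ∧ ∑ s', q s' = 1)
    -- the actual MDP is statistically plausible
    (hrB : ∀ s a, rbar s a ∈ B s a)
    (hpC : ∀ s a, (fun s' => (p s a s').toReal) ∈ C s a) :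
    ∀ i : ℕ,
      ENNReal.ofReal ((⨆ s, uIter B C i s) - ⨅ s', uIter B C i s')
        ≤ mehc p rmax rbar := by
  intro i
  obtain ⟨smax, hmax⟩ := Finite.exists_max (uIter B C i)
  obtain ⟨smin, hmin⟩ := Finite.exists_min (uIter B C i)
  have hsup : (⨆ s, uIter B C i s) ≤ uIter B C i smax := ciSup_le hmax
  have hinf : uIter B C i smin ≤ ⨅ s', uIter B C i s' := le_ciInf hmin
  have key : ∀ π : S → A,
      ENNReal.ofReal (uIter B C i smax - uIter B C i smin) ≤
        hitCostE (polKernel p π)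
          (fun x => ENNReal.ofReal (rmax - rbar x (π x))) smin smax := by
    intro π
    set c : S → ℝ≥0∞ := fun x => ENNReal.ofReal (rmax - rbar x (π x)) with hcdef
    have claim : ∀ j, j ≤ i → ∀ s, ENNReal.ofReal
        (uIter B C i smax - ((i - j : ℕ) : ℝ) * rmax - uIter B C j s)
          ≤ hitCostE (polKernel p π) c s smax := by
      intro j
      induction j with
      | zero =>
        intro _ s
        have h1 : uIter B C i smax ≤ i * rmax :=
          uIter_le rmax B C hBne hBsub hCne hCdist i smax
        have h0 : uIter B C 0 s = 0 := rfl
        have h2 : uIter B C i smax - ((i - 0 : ℕ) : ℝ) * rmax - uIter B C 0 s ≤ 0 := by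
          rw [h0, Nat.sub_zero]
          linarith
        rw [ENNReal.ofReal_of_nonpos h2]
        exact zero_le
      | succ j ih =>
        intro hj1 s
        have hji : j ≤ i := Nat.le_of_succ_le hj1
        by_cases hs : s = smax
        · rw [hs]
          have h1 : uIter B C ((j + 1) + (i - (j + 1))) smax
              ≤ uIter B C (j + 1) smax + ((i - (j + 1) : ℕ) : ℝ) * rmax :=
            uIter_steps rmax B C hBne hBsub hCne hCcp hCdist (i - (j + 1)) (j + 1) smax
          rw [show (j + 1) + (i - (j + 1)) = i from by omega] at h1
          have h2 : uIter B C i smax - ((i - (j + 1) : ℕ) : ℝ) * rmax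
              - uIter B C (j + 1) smax ≤ 0 := by linarith
          rw [ENNReal.ofReal_of_nonpos h2]
          exact zero_le
        · have hne : hitCostE (polKernel p π) c s smax
              = c s + ∑ x, p s (π s) x * hitCostE (polKernel p π) c x smax :=
            hitCostE_ne (polKernel p π) c hs
          by_cases hfin : hitCostE (polKernel p π) c s smax = ⊤
          · rw [hfin]; exact le_top
          · have hsumfin : (∑ x, p s (π s) x * hitCostE (polKernel p π) c x smax) ≠ ⊤ := by
              intro hT
              rw [hne, hT] at hfin
              simp at hfin
            have hterm : ∀ x : S,
                p s (π s) x * hitCostE (polKernel p π) c x smax ≠ ⊤ := fun x =>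
              ne_top_of_le_ne_top hsumfin
                (Finset.single_le_sum (f := fun x =>
                    p s (π s) x * hitCostE (polKernel p π) c x smax)
                  (fun _ _ => zero_le) (Finset.mem_univ x))
            rw [ENNReal.ofReal_le_iff_le_toReal hfin]
            have hQ1 : ∀ x, p s (π s) x ≠ ⊤ := by
              intro x
              apply ne_top_of_le_ne_top (ENNReal.one_ne_top)
              rw [← hp s (π s)]
              exact Finset.single_le_sum (f := fun x => p s (π s) x)
                (fun _ _ => zero_le) (Finset.mem_univ x)
            have hsum1 : ∑ x, (p s (π s) x).toReal = 1 := by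
              rw [← ENNReal.toReal_sum (fun x _ => hQ1 x), hp s (π s), ENNReal.toReal_one]
            have hxbd : ∀ x : S, (p s (π s) x).toReal *
                (uIter B C i smax - ((i - j : ℕ) : ℝ) * rmax
                  - (hitCostE (polKernel p π) c x smax).toReal)
                ≤ (p s (π s) x).toReal * uIter B C j x := by
              intro x
              by_cases hq0 : p s (π s) x = 0
              · simp [hq0]
              · have hHx : hitCostE (polKernel p π) c x smax ≠ ⊤ := by
                  intro hT
                  apply hterm x
                  rw [hT, ENNReal.mul_top hq0]
                have hineq := (ENNReal.ofReal_le_iff_le_toReal hHx).1 (ih hji x)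
                exact mul_le_mul_of_nonneg_left (by linarith) ENNReal.toReal_nonneg
            have hb : rbar s (π s) + ∑ x, (p s (π s) x).toReal * uIter B C j x
                ≤ uIter B C (j + 1) s :=
              uIter_bellman p rbar B C hBcp hCcp hrB hpC j s (π s)
            have htotal : ∑ x, (p s (π s) x).toReal *
                (uIter B C i smax - ((i - j : ℕ) : ℝ) * rmax
                  - (hitCostE (polKernel p π) c x smax).toReal)
                ≤ ∑ x, (p s (π s) x).toReal * uIter B C j x :=
              Finset.sum_le_sum fun x _ => hxbd x
            have hsx : ∑ x, (p s (π s) x).toReal *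
                (uIter B C i smax - ((i - j : ℕ) : ℝ) * rmax
                  - (hitCostE (polKernel p π) c x smax).toReal)
                = (uIter B C i smax - ((i - j : ℕ) : ℝ) * rmax)
                  - ∑ x, (p s (π s) x).toReal
                      * (hitCostE (polKernel p π) c x smax).toReal := by
              simp only [mul_sub]
              rw [Finset.sum_sub_distrib, Finset.sum_sub_distrib, ← Finset.sum_mul,
                ← Finset.sum_mul, hsum1]
              ring
            have hsH : ∑ x, (p s (π s) x).toReal
                  * (hitCostE (polKernel p π) c x smax).toReal
                = (∑ x, p s (π s) x * hitCostE (polKernel p π) c x smax).toReal := by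
              rw [ENNReal.toReal_sum (fun x _ => hterm x)]
              exact Finset.sum_congr rfl fun x _ => (ENNReal.toReal_mul).symm
            have hrs := hr s (π s)
            have hcsR : (c s).toReal = rmax - rbar s (π s) := by
              rw [hcdef]
              exact ENNReal.toReal_ofReal (by linarith [hrs.2])
            have hHsR : (hitCostE (polKernel p π) c s smax).toReal
                = (rmax - rbar s (π s))
                  + (∑ x, p s (π s) x * hitCostE (polKernel p π) c x smax).toReal := by
              rw [hne, ENNReal.toReal_add (by rw [hcdef]; exact ENNReal.ofReal_ne_top)
                hsumfin, hcsR]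
            have hcast : ((i - j : ℕ) : ℝ) = ((i - (j + 1) : ℕ) : ℝ) + 1 := by
              have hn : (i - j) = (i - (j + 1)) + 1 := by omega
              rw [hn]
              push_cast
              ring
            have hm : ((i - j : ℕ) : ℝ) * rmax
                = ((i - (j + 1) : ℕ) : ℝ) * rmax + rmax := by rw [hcast]; ring
            rw [hHsR]
            linarith
    have := claim i le_rfl smin
    rw [show (i - i : ℕ) = 0 from by omega] at this
    simpa using this
  calc ENNReal.ofReal ((⨆ s, uIter B C i s) - ⨅ s', uIter B C i s')
      ≤ ENNReal.ofReal (uIter B C i smax - uIter B C i smin) :=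
        ENNReal.ofReal_le_ofReal (by linarith)
    _ ≤ ⨅ π : S → A, hitCostE (polKernel p π)
          (fun x => ENNReal.ofReal (rmax - rbar x (π x))) smin smax := le_iInf key
    _ ≤ mehc p rmax rbar := by
        show _ ≤ ⨆ s, ⨆ s', ⨅ π : S → A, hitCostE (polKernel p π)
          (fun x => ENNReal.ofReal (rmax - rbar x (π x))) s s'
        exact le_iSup_of_le smin (le_iSup_of_le smax le_rfl)
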